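/- Let n be coprime to 3 and let C be a cyclic code of length n over R = ℤ₉[u]/(u²-u) with generating idempotent e(X). Then the dual code C^⊥ is cyclic with generating idempotent 1 - e(X^{-1}), where e(X^{-1}) denotes the image of e(X) under X ↦ X^{n-1} in R[X]/(Xⁿ-1). -/

import Mathlib

open Polynomial

noncomputable section

/-- The ring `R = ℤ₉[u]/(u² - u)`. -/
abbrev R9 : Type := Polynomial (ZMod 9) ⧸ Ideal.span {(X : Polynomial (ZMod 9)) ^ 2 - X}

instance : CommRing R9 := Ideal.Quotient.commRing _

/-- The element `u` of `R`, the image of `X`. -/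
def uu : R9 := Ideal.Quotient.mk _ (X : Polynomial (ZMod 9))

/-- The canonical embedding `ℤ₉ → R`. -/
def ι : ZMod 9 →+* R9 :=
  (Ideal.Quotient.mk _).comp (Polynomial.C : ZMod 9 →+* Polynomial (ZMod 9))
/-- The quotient ring `R[X]/(Xⁿ - 1)`. -/
abbrev Rn (n : ℕ) : Type := Polynomial R9 ⧸ Ideal.span {(X : Polynomial R9) ^ n - 1}

instance (n : ℕ) : CommRing (Rn n) := Ideal.Quotient.commRing _

/-- The constants embedding `R → R[X]/(Xⁿ-1)`. -/
def ofR (n : ℕ) : R9 →+* Rn n :=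
  (Ideal.Quotient.mk _).comp (Polynomial.C : R9 →+* Polynomial R9)

/-- The image of `X` in `R[X]/(Xⁿ-1)`. -/
def xbar (n : ℕ) : Rn n := Ideal.Quotient.mk _ (X : Polynomial R9)

/-- A word `c ∈ Rⁿ` viewed as the element `Σ cᵢ Xⁱ` of `R[X]/(Xⁿ-1)`. -/
def toPoly (n : ℕ) (c : Fin n → R9) : Rn n :=
  ∑ i, ofR n (c i) * xbar n ^ (i : ℕ)

/-- The ring endomorphism of `R[X]/(Xⁿ-1)` induced by `X ↦ X^{n-1} = X⁻¹`. -/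
def invX (n : ℕ) : Rn n →+* Rn n :=
  Ideal.Quotient.lift _ (Polynomial.eval₂RingHom (ofR n) (xbar n ^ (n - 1)))
    (by
      intro a ha
      have hx : xbar n ^ n = 1 := by
        rw [xbar, ← map_pow, ← map_one (Ideal.Quotient.mk _),
          Ideal.Quotient.mk_eq_mk_iff_sub_mem]
        exact Ideal.subset_span rfl
      have h : Ideal.span {(X : Polynomial R9) ^ n - 1} ≤
          RingHom.ker (Polynomial.eval₂RingHom (ofR n) (xbar n ^ (n - 1))) := by
        rw [Ideal.span_le, Set.singleton_subset_iff]
        simp only [SetLike.mem_coe, RingHom.mem_ker, map_sub, map_pow, map_one,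
          Polynomial.coe_eval₂RingHom, Polynomial.eval₂_X]
        rw [← pow_mul, Nat.mul_comm, pow_mul, hx, one_pow, sub_self]
      exact h ha)

/-- The Euclidean dual of the cyclic code given by an ideal of `R[X]/(Xⁿ-1)`. -/
def dualCode (n : ℕ) (J : Ideal (Rn n)) : Set (Fin n → R9) :=
  {x | ∀ c : Fin n → R9, toPoly n c ∈ J → ∑ i, x i * c i = 0}

/-- The cyclic shift. -/
def shift {α : Type*} {n : ℕ} [NeZero n] (c : Fin n → α) : Fin n → α :=
  fun i => c (i - 1)


set_option synthInstance.maxHeartbeats 1000000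
set_option maxHeartbeats 1000000

instance : Nontrivial R9 := by
  apply Ideal.Quotient.nontrivial_iff.mpr
  intro h
  have h1 : (1 : Polynomial (ZMod 9)) ∈ Ideal.span {(X : Polynomial (ZMod 9)) ^ 2 - X} := by
    rw [h]; trivial
  rw [Ideal.mem_span_singleton] at h1
  obtain ⟨a, ha⟩ := h1
  have := congrArg (Polynomial.eval 0) ha
  simp at this
  exact absurd this (by decide)

variable (n : ℕ) [NeZero n]

lemma monic_f : ((X : Polynomial R9) ^ n - 1).Monic := by
  have hne : n ≠ 0 := NeZero.ne n
  have := Polynomial.monic_X_pow_sub_C (1 : R9) hne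
  simpa using this

def pb : PowerBasis R9 (Rn n) := AdjoinRoot.powerBasis' (monic_f n)

lemma pb_dim : (pb n).dim = n := by
  show ((X : Polynomial R9) ^ n - 1).natDegree = n
  have : ((X : Polynomial R9) ^ n - 1) = X ^ n - Polynomial.C 1 := by simp
  rw [this, Polynomial.natDegree_X_pow_sub_C]

lemma pb_gen : (pb n).gen = xbar n := rfl

def B : Module.Basis (Fin n) R9 (Rn n) := ((pb n).basis).reindex (finCongr (pb_dim n))

lemma B_apply (i : Fin n) : B n i = xbar n ^ (i : ℕ) := by
  rw [B, Module.Basis.reindex_apply]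
  rw [(pb n).basis_eq_pow, pb_gen]
  congr 1

lemma toPoly_eq (c : Fin n → R9) : toPoly n c = ∑ i, c i • B n i := by
  unfold toPoly
  refine Finset.sum_congr rfl fun i _ => ?_
  rw [B_apply]
  exact (Algebra.smul_def (c i) (xbar n ^ (i:ℕ))).symm

lemma toPoly_injective : Function.Injective (toPoly n) := by
  intro a b hab
  rw [toPoly_eq, toPoly_eq] at hab
  calc a = ⇑((B n).repr (∑ i, a i • B n i)) := ((B n).repr_sum_self a).symm
    _ = ⇑((B n).repr (∑ i, b i • B n i)) := by rw [hab]
    _ = b := (B n).repr_sum_self b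

lemma toPoly_surjective : Function.Surjective (toPoly n) := by
  intro y
  refine ⟨fun i => (B n).repr y i, ?_⟩
  rw [toPoly_eq]
  exact (B n).sum_repr y

set_option linter.unusedSectionVars false
lemma xbar_pow_n : xbar n ^ n = 1 := by
  rw [xbar, ← map_pow, ← map_one (Ideal.Quotient.mk (Ideal.span {(X : Polynomial R9) ^ n - 1})),
    Ideal.Quotient.mk_eq_mk_iff_sub_mem]
  exact Ideal.subset_span rfl

lemma xpow_mod (m : ℕ) : xbar n ^ m = xbar n ^ (m % n) := by
  conv_lhs => rw [← Nat.div_add_mod m n]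
  rw [pow_add, pow_mul, xbar_pow_n, one_pow, one_mul]

lemma xpow_val_add (a b : Fin n) : xbar n ^ ((a + b : Fin n) : ℕ) = xbar n ^ (a : ℕ) * xbar n ^ (b : ℕ) := by
  rw [Fin.val_add, ← xpow_mod, pow_add]

lemma xpow_inv (i j : Fin n) :
    xbar n ^ (i : ℕ) * xbar n ^ ((n - 1) * (j : ℕ)) = xbar n ^ ((i - j : Fin n) : ℕ) := by
  have h1 : xbar n ^ ((i - j : Fin n) : ℕ) * xbar n ^ (j : ℕ) = xbar n ^ (i : ℕ) := by
    rw [← xpow_val_add, sub_add_cancel]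
  calc xbar n ^ (i : ℕ) * xbar n ^ ((n - 1) * (j : ℕ))
      = xbar n ^ ((i - j : Fin n) : ℕ) * (xbar n ^ (j : ℕ) * xbar n ^ ((n - 1) * (j : ℕ))) := by
        rw [← mul_assoc, h1]
    _ = xbar n ^ ((i - j : Fin n) : ℕ) * (xbar n ^ n) ^ (j : ℕ) := by
        rw [← pow_mul, ← pow_add]
        congr 1
        have hn1 : 1 ≤ n := Nat.one_le_iff_ne_zero.mpr (NeZero.ne n)
        cases' Nat.exists_eq_add_of_le hn1 with m hm
        subst hm
        have h2 : 1 + m - 1 = m := by omega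
        rw [h2]; ring
    _ = xbar n ^ ((i - j : Fin n) : ℕ) := by rw [xbar_pow_n, one_pow, mul_one]

lemma invX_mk (p : Polynomial R9) :
    invX n (Ideal.Quotient.mk _ p) = Polynomial.eval₂ (ofR n) (xbar n ^ (n - 1)) p := rfl

lemma invX_toPoly (c : Fin n → R9) :
    invX n (toPoly n c) = ∑ j, ofR n (c j) * (xbar n ^ (n - 1)) ^ (j : ℕ) := by
  unfold toPoly
  rw [map_sum]
  refine Finset.sum_congr rfl fun j _ => ?_
  rw [map_mul, map_pow]
  have h1 : invX n (ofR n (c j)) = ofR n (c j) := by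
    show invX n (Ideal.Quotient.mk _ (Polynomial.C (c j))) = Ideal.Quotient.mk _ (Polynomial.C (c j))
    rw [invX_mk, Polynomial.eval₂_C]
    rfl
  have h2 : invX n (xbar n) = xbar n ^ (n - 1) := by
    rw [xbar, invX_mk, Polynomial.eval₂_X]
    rfl
  rw [h1, h2]

lemma corr_eq (x c : Fin n → R9) :
    toPoly n x * invX n (toPoly n c) = toPoly n (fun k => ∑ i, x i * c (i - k)) := by
  rw [invX_toPoly]
  unfold toPoly
  rw [Finset.sum_mul_sum]
  have lhs_eq : ∀ i j : Fin n, (ofR n (x i) * xbar n ^ (i:ℕ)) * (ofR n (c j) * (xbar n ^ (n-1)) ^ (j:ℕ))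
      = ofR n (x i * c j) * xbar n ^ ((i - j : Fin n) : ℕ) := by
    intro i j
    rw [← pow_mul, map_mul]
    rw [show (ofR n (x i) * xbar n ^ (i:ℕ)) * (ofR n (c j) * xbar n ^ ((n-1) * (j:ℕ)))
      = (ofR n (x i) * ofR n (c j)) * (xbar n ^ (i:ℕ) * xbar n ^ ((n-1)*(j:ℕ))) by ring]
    rw [xpow_inv]
  calc (∑ i : Fin n, ∑ j : Fin n, (ofR n (x i) * xbar n ^ (i:ℕ)) * (ofR n (c j) * (xbar n ^ (n-1)) ^ (j:ℕ)))
      = ∑ i : Fin n, ∑ j : Fin n, ofR n (x i * c j) * xbar n ^ ((i - j : Fin n) : ℕ) := by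
        exact Finset.sum_congr rfl fun i _ => Finset.sum_congr rfl fun j _ => lhs_eq i j
    _ = ∑ i : Fin n, ∑ k : Fin n, ofR n (x i * c (i - k)) * xbar n ^ (k : ℕ) := by
        refine Finset.sum_congr rfl fun i _ => ?_
        refine Fintype.sum_equiv (Equiv.subLeft i) _ _ fun k => ?_
        simp [Equiv.subLeft, sub_sub_cancel]
    _ = ∑ k : Fin n, ofR n (∑ i, x i * c (i - k)) * xbar n ^ (k : ℕ) := by
        rw [Finset.sum_comm]
        refine Finset.sum_congr rfl fun k _ => ?_
        rw [map_sum, Finset.sum_mul]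

lemma toPoly_sub (k : Fin n) (v : Fin n → R9) :
    toPoly n (fun i => v (i - k)) = toPoly n v * xbar n ^ (k : ℕ) := by
  unfold toPoly
  rw [Finset.sum_mul]
  refine (Fintype.sum_equiv (Equiv.addRight k) _ _ fun j => ?_).symm
  simp only [Equiv.coe_addRight, add_sub_cancel_right, xpow_val_add]
  ring

lemma xpow_val_cancel (k : Fin n) : xbar n ^ (k : ℕ) * xbar n ^ (n - (k : ℕ)) = 1 := by
  rw [← pow_add]
  have h : (k : ℕ) + (n - (k : ℕ)) = n := by have := k.isLt; omega
  rw [h, xbar_pow_n]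

lemma toPoly_zero : toPoly n (fun _ => 0) = 0 := by simp [toPoly]

lemma toPoly_sub_mem (J : Ideal (Rn n)) (k : Fin n) (v : Fin n → R9) (hv : toPoly n v ∈ J) :
    toPoly n (fun i => v (i - k)) ∈ J := by
  rw [toPoly_sub]
  exact Ideal.mul_mem_right _ _ hv

lemma toPoly_add_mem (J : Ideal (Rn n)) (k : Fin n) (v : Fin n → R9) (hv : toPoly n v ∈ J) :
    toPoly n (fun i => v (i + k)) ∈ J := by
  have hw : toPoly n (fun i => v (i - k + k)) = toPoly n (fun i => v (i + k)) * xbar n ^ (k : ℕ) :=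
    toPoly_sub n k (fun i => v (i + k))
  have hv' : (fun i => v (i - k + k)) = v := by funext i; rw [sub_add_cancel]
  rw [hv'] at hw
  have : toPoly n (fun i => v (i + k)) = toPoly n v * xbar n ^ (n - (k : ℕ)) := by
    calc toPoly n (fun i => v (i + k))
        = toPoly n (fun i => v (i + k)) * (xbar n ^ (k : ℕ) * xbar n ^ (n - (k : ℕ))) := by
          rw [xpow_val_cancel, mul_one]
      _ = (toPoly n (fun i => v (i + k)) * xbar n ^ (k : ℕ)) * xbar n ^ (n - (k : ℕ)) := by ring
      _ = toPoly n v * xbar n ^ (n - (k : ℕ)) := by rw [← hw]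
  rw [this]
  exact Ideal.mul_mem_right _ _ hv

theorem stmt15 (n : ℕ) [NeZero n] (hn : Nat.Coprime n 3) (Cc : Ideal (Rn n))
    (e : Rn n) (he : IsIdempotentElem e) (hC : Cc = Ideal.span {e}) :
    shift '' dualCode n Cc = dualCode n Cc ∧
    IsIdempotentElem (1 - invX n e) ∧
    dualCode n Cc = {x | toPoly n x ∈ Ideal.span {1 - invX n e}} := by
  have hf : IsIdempotentElem (invX n e) := by
    unfold IsIdempotentElem
    rw [← map_mul, he]
  set f := invX n e with hfdef
  -- Part 1
  have hA : ∀ x ∈ dualCode n Cc, shift x ∈ dualCode n Cc := by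
    intro x hx c hc
    have hsum : ∑ i, shift x i * c i = ∑ j, x j * c (j + 1) := by
      refine (Fintype.sum_equiv (Equiv.addRight 1) _ _ fun j => ?_).symm
      simp [shift, Equiv.coe_addRight, add_sub_cancel_right]
    rw [hsum]
    exact hx (fun j => c (j + 1)) (toPoly_add_mem n Cc 1 c hc)
  have hB : ∀ x ∈ dualCode n Cc, (fun i => x (i + 1)) ∈ dualCode n Cc := by
    intro x hx c hc
    have hsum : ∑ i, x (i + 1) * c i = ∑ j, x j * c (j - 1) := by
      refine Fintype.sum_equiv (Equiv.addRight 1) _ _ fun i => ?_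
      simp [Equiv.coe_addRight, add_sub_cancel_right]
    rw [hsum]
    exact hx (fun j => c (j - 1)) (toPoly_sub_mem n Cc 1 c hc)
  refine ⟨?_, hf.one_sub, ?_⟩
  · ext x
    constructor
    · rintro ⟨y, hy, rfl⟩
      exact hA y hy
    · intro hx
      refine ⟨fun i => x (i + 1), hB x hx, ?_⟩
      funext j
      show x (j - 1 + 1) = x j
      rw [sub_add_cancel]
  · ext x
    simp only [Set.mem_setOf_eq]
    constructor
    · intro hx
      obtain ⟨ce, hce⟩ := toPoly_surjective n e
      have hprod : toPoly n x * f = 0 := by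
        rw [hfdef, ← hce, corr_eq]
        have hz : (fun k => ∑ i, x i * ce (i - k)) = fun _ => 0 := by
          funext k
          apply hx
          have := toPoly_sub_mem n Cc k ce (by rw [hce, hC]; exact Ideal.subset_span rfl)
          exact this
        rw [hz, toPoly_zero]
      rw [Ideal.mem_span_singleton]
      refine ⟨toPoly n x, ?_⟩
      calc toPoly n x = toPoly n x - toPoly n x * f := by rw [hprod, sub_zero]
        _ = (1 - f) * toPoly n x := by ring
    · intro hx c hc
      rw [Ideal.mem_span_singleton] at hx
      obtain ⟨g, hg⟩ := hx
      have hxf : toPoly n x * f = 0 := by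
        rw [hg]
        have h2 : f * f = f := hf
        calc (1 - f) * g * f = g * f - g * (f * f) := by ring
          _ = g * f - g * f := by rw [h2]
          _ = 0 := sub_self _
      rw [hC, Ideal.mem_span_singleton] at hc
      obtain ⟨g2, hg2⟩ := hc
      have hzero : toPoly n x * invX n (toPoly n c) = 0 := by
        rw [hg2, map_mul, ← hfdef]
        calc toPoly n x * (f * invX n g2) = (toPoly n x * f) * invX n g2 := by ring
          _ = 0 := by rw [hxf, zero_mul]
      rw [corr_eq] at hzero
      have h0 : (fun k => ∑ i, x i * c (i - k)) = fun _ => (0 : R9) := by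
        apply toPoly_injective n
        rw [hzero, toPoly_zero]
      have := congrFun h0 0
      simpa [sub_zero] using this
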